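/- arXiv:1902.08170 — 2 statements merged into one kernel-verified Lean document; each statement's English description precedes it below -/
import Mathlib

section
/- For every real number a, lim_{x→0⁺} ( r_a(x) − x + x² log x ) / x² = 1 − γ − a, where γ is the Euler–Mascheroni constant. (In the paper's notation: r = r̃ − r̃² log r̃ + (1 − γ − a) r̃² + o(r̃²) as r̃ → 0⁺; in particular the gauge transformation is polyhomogeneous at the critical set I⁻.) -/
open Real Filter MeasureTheory Set

noncomputable section

/-- `Eineg x = Ei(−x) = −∫_x^∞ e^{−t}/t dt`, the exponential integral. -/
def Eineg (x : ℝ) : ℝ := -∫ t in Set.Ioi x, Real.exp (-t) / t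

/-- `u_a(x) = e^{−x}/x + a + Ei(−x)` for `x > 0`. -/
def u (a x : ℝ) : ℝ := Real.exp (-x) / x + a + Eineg x

/-- `r_a(x) = 1/u_a(x)` (meaningful on intervals where `u_a > 0`). -/
def rga (a x : ℝ) : ℝ := (u a x)⁻¹

lemma intOn_exp_div (x : ℝ) (hx : 0 < x) :
    IntegrableOn (fun t => Real.exp (-t) / t) (Ioi x) := by
  have h1 : IntegrableOn (fun t => Real.exp (-t) / x) (Ioi x) := by
    have := (exp_neg_integrableOn_Ioi x (one_pos)).div_const x
    simpa [IntegrableOn] using this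
  apply h1.mono' (((measurable_exp.comp measurable_neg).div measurable_id).aestronglyMeasurable)
  filter_upwards [ae_restrict_mem measurableSet_Ioi] with t ht
  have htx : x < t := ht
  show ‖Real.exp (-t) / t‖ ≤ Real.exp (-t) / x
  simp only [norm_div, Real.norm_eq_abs, Function.comp, id, abs_of_pos (exp_pos _),
    abs_of_pos (hx.trans htx)]
  exact div_le_div_of_nonneg_left (exp_pos _).le hx htx.le

lemma abs_expm1_div_le {t : ℝ} (ht : 0 < t) : ‖(Real.exp (-t) - 1) / t‖ ≤ 1 := by
  rw [norm_div, Real.norm_eq_abs, Real.norm_eq_abs, abs_of_pos ht, div_le_one ht,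
    abs_sub_comm, abs_of_nonneg (sub_nonneg.mpr (Real.exp_le_one_iff.mpr (by linarith)))]
  nlinarith [Real.add_one_le_exp (-t)]

lemma intOn_g : IntegrableOn (fun t => (Real.exp (-t) - 1) / t) (Ioc (0:ℝ) 1) := by
  apply Measure.integrableOn_of_bounded (M := 1) (by simp)
    (((measurable_exp.comp measurable_neg).sub measurable_const).div
      measurable_id).aestronglyMeasurable
  filter_upwards [ae_restrict_mem measurableSet_Ioc] with t ht
  exact abs_expm1_div_le ht.1

lemma Eineg_eq {x : ℝ} (hx : 0 < x) (hx1 : x ≤ 1) :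
    Eineg x = -(∫ t in Ioc x 1, (Real.exp (-t) - 1) / t) + Real.log x
      - ∫ t in Ioi 1, Real.exp (-t) / t := by
  have hsplit : (∫ t in Ioi x, Real.exp (-t) / t)
      = (∫ t in Ioc x 1, Real.exp (-t) / t) + ∫ t in Ioi 1, Real.exp (-t) / t := by
    rw [← setIntegral_union (Ioc_disjoint_Ioi le_rfl) measurableSet_Ioi
      ((intOn_exp_div x hx).mono_set Ioc_subset_Ioi_self) (intOn_exp_div 1 one_pos),
      Ioc_union_Ioi_eq_Ioi hx1]
  have hmid : (∫ t in Ioc x 1, Real.exp (-t) / t)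
      = (∫ t in Ioc x 1, (Real.exp (-t) - 1) / t) + ∫ t in Ioc x 1, t⁻¹ := by
    rw [← integral_add (intOn_g.mono_set (Ioc_subset_Ioc hx.le le_rfl))
      ((((continuousOn_inv₀ (G₀ := ℝ)).mono (fun t ht hc => (hx.trans_le ht.1).ne' hc)).integrableOn_Icc).mono_set
        Ioc_subset_Icc_self)]
    apply setIntegral_congr_fun measurableSet_Ioc
    intro t ht
    field_simp
    ring
  have hinv : (∫ t in Ioc x 1, t⁻¹) = - Real.log x := by
    rw [← intervalIntegral.integral_of_le hx1, integral_inv_of_pos hx one_pos,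
      Real.log_div one_ne_zero hx.ne', Real.log_one, zero_sub]
  rw [Eineg, hsplit, hmid, hinv]
  ring

def Jc : ℝ := ∫ t in Ioc (0:ℝ) 1, (Real.exp (-t) - 1) / t
def Cc : ℝ := ∫ t in Ioi (1:ℝ), Real.exp (-t) / t

lemma tendsto_G :
    Tendsto (fun x => ∫ t in Ioc x 1, (Real.exp (-t) - 1) / t)
      (nhdsWithin 0 (Ioi 0)) (nhds Jc) := by
  rw [← tendsto_sub_nhds_zero_iff]
  have hb : ∀ᶠ x in nhdsWithin (0:ℝ) (Ioi 0),
      ‖(∫ t in Ioc x 1, (Real.exp (-t) - 1) / t) - Jc‖ ≤ x := by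
    filter_upwards [Ioo_mem_nhdsGT one_pos] with x hx
    have hsplit : Jc = (∫ t in Ioc (0:ℝ) x, (Real.exp (-t) - 1) / t)
        + ∫ t in Ioc x 1, (Real.exp (-t) - 1) / t := by
      rw [Jc, ← setIntegral_union (Ioc_disjoint_Ioc_of_le le_rfl) measurableSet_Ioc
        (intOn_g.mono_set (Ioc_subset_Ioc le_rfl hx.2.le))
        (intOn_g.mono_set (Ioc_subset_Ioc hx.1.le le_rfl)),
        Ioc_union_Ioc_eq_Ioc hx.1.le hx.2.le]
    have : (∫ t in Ioc x 1, (Real.exp (-t) - 1) / t) - Jc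
        = -(∫ t in Ioc (0:ℝ) x, (Real.exp (-t) - 1) / t) := by rw [hsplit]; ring
    rw [this, norm_neg]
    calc ‖∫ t in Ioc (0:ℝ) x, (Real.exp (-t) - 1) / t‖
        ≤ 1 * (volume (Ioc (0:ℝ) x)).toReal := by
          apply norm_setIntegral_le_of_norm_le_const (by simp)
          · intro t ht; exact abs_expm1_div_le ht.1
      _ = x := by simp [hx.1.le]
  exact squeeze_zero_norm' hb (tendsto_id.mono_left nhdsWithin_le_nhds)

lemma tendsto_Eineg_sub_log :
    Tendsto (fun x => Eineg x - Real.log x) (nhdsWithin 0 (Ioi 0)) (nhds (-(Jc + Cc))) := by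
  have h : Tendsto (fun x => -(∫ t in Ioc x 1, (Real.exp (-t) - 1) / t) - Cc)
      (nhdsWithin 0 (Ioi 0)) (nhds (-(Jc + Cc))) := by
    have := (tendsto_G.neg).sub_const Cc
    convert this using 2; ring
  apply h.congr'
  filter_upwards [Ioo_mem_nhdsGT one_pos] with x hx
  rw [Eineg_eq hx.1 hx.2.le, Cc]; ring

lemma abs_expm1_le {t : ℝ} (ht : 0 ≤ t) : |Real.exp (-t) - 1| ≤ t := by
  rw [abs_sub_comm, abs_of_nonneg (sub_nonneg.mpr (Real.exp_le_one_iff.mpr (by linarith)))]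
  nlinarith [Real.add_one_le_exp (-t)]

lemma intOn_gs {s : ℝ} (hs : 0 < s) (hs1 : s ≤ 1) :
    IntegrableOn (fun t => (Real.exp (-t) - 1) * t ^ (s - 1)) (Ioc (0:ℝ) 1) := by
  apply Measure.integrableOn_of_bounded (M := 1) (by simp)
    (((measurable_exp.comp measurable_neg).sub measurable_const).mul
      (by measurability : Measurable fun t : ℝ => t ^ (s-1))).aestronglyMeasurable
  filter_upwards [ae_restrict_mem measurableSet_Ioc] with t ht
  show ‖(Real.exp (-t) - 1) * t ^ (s - 1)‖ ≤ 1
  rw [norm_mul, Real.norm_eq_abs, Real.norm_eq_abs, abs_of_nonneg (rpow_nonneg ht.1.le _)]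
  calc |Real.exp (-t) - 1| * t ^ (s - 1) ≤ t * t ^ (s - 1) :=
        mul_le_mul_of_nonneg_right (abs_expm1_le ht.1.le) (rpow_nonneg ht.1.le _)
    _ = t ^ s := by
        rw [← Real.rpow_one_add' ht.1.le (by linarith)]; ring_nf
    _ ≤ 1 := Real.rpow_le_one ht.1.le ht.2 hs.le

lemma Gamma_sub_inv_eq {s : ℝ} (hs : 0 < s) (hs1 : s < 1) :
    Real.Gamma s - 1 / s
      = (∫ t in Ioc (0:ℝ) 1, (Real.exp (-t) - 1) * t ^ (s - 1))
        + ∫ t in Ioi (1:ℝ), Real.exp (-t) * t ^ (s - 1) := by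
  have hsplit : Real.Gamma s = (∫ t in Ioc (0:ℝ) 1, Real.exp (-t) * t ^ (s - 1))
      + ∫ t in Ioi (1:ℝ), Real.exp (-t) * t ^ (s - 1) := by
    rw [Real.Gamma_eq_integral hs,
      ← setIntegral_union (Ioc_disjoint_Ioi le_rfl) measurableSet_Ioi
        ((Real.GammaIntegral_convergent hs).mono_set Ioc_subset_Ioi_self)
        ((Real.GammaIntegral_convergent hs).mono_set (Ioi_subset_Ioi zero_le_one)),
      Ioc_union_Ioi_eq_Ioi zero_le_one]
  have hint_pow : IntegrableOn (fun t : ℝ => t ^ (s - 1)) (Ioc (0:ℝ) 1) := by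
    have h : IntegrableOn
        (fun t : ℝ => Real.exp (-t) * t ^ (s - 1) - (Real.exp (-t) - 1) * t ^ (s - 1))
        (Ioc (0:ℝ) 1) :=
      ((Real.GammaIntegral_convergent hs).mono_set Ioc_subset_Ioi_self).sub
        (intOn_gs hs hs1.le)
    apply h.congr_fun ?_ measurableSet_Ioc
    intro t _; ring
  have hmid : (∫ t in Ioc (0:ℝ) 1, Real.exp (-t) * t ^ (s - 1))
      = (∫ t in Ioc (0:ℝ) 1, (Real.exp (-t) - 1) * t ^ (s - 1))
        + ∫ t in Ioc (0:ℝ) 1, t ^ (s - 1) := by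
    rw [← integral_add (intOn_gs hs hs1.le) hint_pow]
    apply setIntegral_congr_fun measurableSet_Ioc
    intro t _; ring
  have hpow : (∫ t in Ioc (0:ℝ) 1, t ^ (s - 1)) = 1 / s := by
    rw [← intervalIntegral.integral_of_le zero_le_one,
      integral_rpow (Or.inl (by linarith))]
    rw [sub_add_cancel, Real.one_rpow, Real.zero_rpow hs.ne']
    norm_num
  rw [hsplit, hmid, hpow]; ring

lemma rpow_cont_at {t : ℝ} (ht : 0 < t) :
    Tendsto (fun s : ℝ => t ^ (s - 1)) (nhdsWithin 0 (Ioi 0)) (nhds (t ^ ((0:ℝ) - 1))) := by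
  have h1 : ContinuousAt (fun p : ℝ × ℝ => p.1 ^ p.2) (t, (0:ℝ) - 1) :=
    Real.continuousAt_rpow (t, (0:ℝ) - 1) (Or.inl ht.ne')
  have hg : ContinuousAt (fun s : ℝ => ((t, s - 1) : ℝ × ℝ)) 0 := by fun_prop
  have h2 : ContinuousAt (fun s : ℝ => t ^ (s - 1)) 0 :=
    ContinuousAt.comp (f := fun s : ℝ => ((t, s - 1) : ℝ × ℝ))
      (g := fun p : ℝ × ℝ => p.1 ^ p.2) (x := (0:ℝ)) h1 hg
  exact h2.tendsto.mono_left nhdsWithin_le_nhds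

lemma tendsto_I1 :
    Tendsto (fun s : ℝ => ∫ t in Ioc (0:ℝ) 1, (Real.exp (-t) - 1) * t ^ (s - 1))
      (nhdsWithin 0 (Ioi 0)) (nhds Jc) := by
  have hJ : Jc = ∫ t in Ioc (0:ℝ) 1, (Real.exp (-t) - 1) * t ^ ((0:ℝ) - 1) := by
    rw [Jc]
    apply setIntegral_congr_fun measurableSet_Ioc
    intro t ht
    simp only [zero_sub, Real.rpow_neg_one, div_eq_mul_inv]
  rw [hJ]
  apply tendsto_integral_filter_of_dominated_convergence (bound := fun _ => (1:ℝ))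
  · filter_upwards with s
    exact (((measurable_exp.comp measurable_neg).sub measurable_const).mul
      (by measurability : Measurable fun t : ℝ => t ^ (s-1))).aestronglyMeasurable
  · filter_upwards [Ioo_mem_nhdsGT one_pos] with s hs
    filter_upwards [ae_restrict_mem measurableSet_Ioc] with t ht
    rw [norm_mul, Real.norm_eq_abs, Real.norm_eq_abs, abs_of_nonneg (rpow_nonneg ht.1.le _)]
    calc |Real.exp (-t) - 1| * t ^ (s - 1) ≤ t * t ^ (s - 1) :=
          mul_le_mul_of_nonneg_right (abs_expm1_le ht.1.le) (rpow_nonneg ht.1.le _)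
      _ = t ^ s := by rw [← Real.rpow_one_add' ht.1.le (by linarith [hs.1])]; ring_nf
      _ ≤ 1 := Real.rpow_le_one ht.1.le ht.2 hs.1.le
  · exact integrableOn_const (by simp)
  · filter_upwards [ae_restrict_mem measurableSet_Ioc] with t ht
    exact (rpow_cont_at ht.1).const_mul _

lemma tendsto_I2 :
    Tendsto (fun s : ℝ => ∫ t in Ioi (1:ℝ), Real.exp (-t) * t ^ (s - 1))
      (nhdsWithin 0 (Ioi 0)) (nhds Cc) := by
  have hC : Cc = ∫ t in Ioi (1:ℝ), Real.exp (-t) * t ^ ((0:ℝ) - 1) := by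
    rw [Cc]
    apply setIntegral_congr_fun measurableSet_Ioi
    intro t ht
    simp only [zero_sub, Real.rpow_neg_one, div_eq_mul_inv]
  rw [hC]
  apply tendsto_integral_filter_of_dominated_convergence (bound := fun t => Real.exp (-t))
  · filter_upwards with s
    exact ((measurable_exp.comp measurable_neg).mul
      (by measurability : Measurable fun t : ℝ => t ^ (s-1))).aestronglyMeasurable
  · filter_upwards [Ioo_mem_nhdsGT one_pos] with s hs
    filter_upwards [ae_restrict_mem measurableSet_Ioi] with t ht
    have ht0 : (0:ℝ) < t := lt_trans one_pos ht
    rw [norm_mul, Real.norm_eq_abs, Real.norm_eq_abs, abs_of_pos (exp_pos _),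
      abs_of_nonneg (rpow_nonneg ht0.le _)]
    calc Real.exp (-t) * t ^ (s - 1) ≤ Real.exp (-t) * 1 := by
          apply mul_le_mul_of_nonneg_left ?_ (exp_pos _).le
          exact Real.rpow_le_one_of_one_le_of_nonpos (le_of_lt ht) (by linarith [hs.2])
      _ = Real.exp (-t) := mul_one _
  · simpa [IntegrableOn] using exp_neg_integrableOn_Ioi 1 one_pos
  · filter_upwards [ae_restrict_mem measurableSet_Ioi] with t ht
    exact (rpow_cont_at (lt_trans one_pos ht)).const_mul _

lemma Jc_add_Cc : Jc + Cc = -Real.eulerMascheroniConstant := by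
  have h1 : Tendsto (fun s : ℝ => Real.Gamma s - 1 / s) (nhdsWithin 0 (Ioi 0)) (nhds (Jc + Cc)) := by
    apply (tendsto_I1.add tendsto_I2).congr'
    filter_upwards [Ioo_mem_nhdsGT one_pos] with s hs
    exact (Gamma_sub_inv_eq hs.1 hs.2).symm
  have h2 : Tendsto (fun s : ℝ => Real.Gamma s - 1 / s) (nhdsWithin 0 (Ioi 0))
      (nhds (-Real.eulerMascheroniConstant)) := by
    have hd := Real.hasDerivAt_Gamma_one
    rw [hasDerivAt_iff_tendsto_slope] at hd
    have hmap : Tendsto (fun s : ℝ => 1 + s) (nhdsWithin 0 (Ioi 0))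
        (nhdsWithin 1 {(1:ℝ)}ᶜ) := by
      apply tendsto_nhdsWithin_of_tendsto_nhds_of_eventually_within
      · have : Tendsto (fun s : ℝ => 1 + s) (nhds 0) (nhds 1) := by
          simpa using (continuous_add_left (1:ℝ)).tendsto (0:ℝ)
        exact this.mono_left nhdsWithin_le_nhds
      · filter_upwards [self_mem_nhdsWithin] with s hs
        simp only [mem_compl_iff, mem_singleton_iff]
        have : (0:ℝ) < s := hs
        intro h; linarith [h]
    have hcomp := hd.comp hmap
    apply hcomp.congr'
    filter_upwards [self_mem_nhdsWithin] with s hs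
    have hs0 : (0:ℝ) < s := hs
    have : Real.Gamma (1 + s) = s * Real.Gamma s := by
      rw [add_comm]; exact Real.Gamma_add_one hs0.ne'
    simp only [Function.comp_apply, slope_def_field, this, Real.Gamma_one]
    field_simp
    linear_combination (-1 + s * Real.Gamma s) * mul_inv_cancel₀ hs0.ne'
  exact tendsto_nhds_unique h1 h2

lemma tendsto_F :
    Tendsto (fun x => Eineg x - Real.log x) (nhdsWithin 0 (Ioi 0))
      (nhds Real.eulerMascheroniConstant) := by
  have := tendsto_Eineg_sub_log
  rwa [Jc_add_Cc, neg_neg] at this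

lemma hxlog : Tendsto (fun x : ℝ => x * Real.log x) (nhdsWithin 0 (Ioi 0)) (nhds 0) := by
  have := tendsto_log_mul_rpow_nhdsGT_zero one_pos
  simp only [Real.rpow_one] at this
  exact this.congr (fun x => mul_comm _ _)

lemma hxlog2 : Tendsto (fun x : ℝ => x * (Real.log x)^2) (nhdsWithin 0 (Ioi 0)) (nhds 0) := by
  have h := tendsto_log_mul_rpow_nhdsGT_zero (by norm_num : (0:ℝ) < 1/2)
  have h2 := h.mul h
  rw [mul_zero] at h2
  apply h2.congr'
  filter_upwards [self_mem_nhdsWithin] with x hx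
  have hx0 : (0:ℝ) < x := hx
  rw [mul_mul_mul_comm, ← Real.rpow_add hx0]
  norm_num
  ring

lemma hE : Tendsto (fun x : ℝ => (Real.exp (-x) - 1) / x) (nhdsWithin 0 (Ioi 0)) (nhds (-1)) := by
  have hd : HasDerivAt (fun x : ℝ => Real.exp (-x)) (-1) 0 := by
    simpa [Function.comp_def] using (Real.hasDerivAt_exp (-0)).comp 0 ((hasDerivAt_id (0:ℝ)).neg)
  rw [hasDerivAt_iff_tendsto_slope] at hd
  have hmono : nhdsWithin (0:ℝ) (Ioi 0) ≤ nhdsWithin (0:ℝ) {(0:ℝ)}ᶜ :=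
    nhdsWithin_mono 0 (fun x hx => ne_of_gt hx)
  apply (hd.mono_left hmono).congr
  intro x
  simp [slope_def_field]

/-- For every real `a`, `lim_{x→0⁺} (r_a(x) − x + x² log x)/x² = 1 − γ − a`:
`r = r̃ − r̃² log r̃ + (1 − γ − a) r̃² + o(r̃²)` as `r̃ → 0⁺`. -/
theorem stmt_7 (a : ℝ) :
    Filter.Tendsto (fun x => (rga a x - x + x^2 * Real.log x) / x^2)
      (nhdsWithin 0 (Set.Ioi 0))
      (nhds (1 - Real.eulerMascheroniConstant - a)) := by
  set γ' := Real.eulerMascheroniConstant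
  set w : ℝ → ℝ := fun x =>
    Real.exp (-x) + a * x + x * Real.log x + x * (Eineg x - Real.log x) with hw_def
  -- w tends to 1
  have hw : Tendsto w (nhdsWithin 0 (Ioi 0)) (nhds 1) := by
    have h1 : Tendsto (fun x : ℝ => Real.exp (-x)) (nhdsWithin 0 (Ioi 0)) (nhds 1) := by
      have : Tendsto (fun x : ℝ => Real.exp (-x)) (nhds 0) (nhds 1) := by
        simpa [Function.comp_def] using (Real.continuous_exp.comp continuous_neg).tendsto (0:ℝ)
      exact this.mono_left nhdsWithin_le_nhds
    have h2 : Tendsto (fun x : ℝ => a * x) (nhdsWithin 0 (Ioi 0)) (nhds 0) := by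
      simpa using (tendsto_id.const_mul a).mono_left
        (nhdsWithin_le_nhds : nhdsWithin (0:ℝ) (Ioi 0) ≤ nhds 0)
    have h4 : Tendsto (fun x : ℝ => x * (Eineg x - Real.log x))
        (nhdsWithin 0 (Ioi 0)) (nhds 0) := by
      have := (tendsto_id.mono_left
        (nhdsWithin_le_nhds : nhdsWithin (0:ℝ) (Ioi 0) ≤ nhds 0)).mul tendsto_F
      simpa using this
    have := ((h1.add h2).add hxlog).add h4
    simpa using this
  -- eventually w ≠ 0
  have hwne : ∀ᶠ x in nhdsWithin (0:ℝ) (Ioi 0), w x ≠ 0 := by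
    filter_upwards [hw.eventually (eventually_gt_nhds (by norm_num : (0:ℝ) < 1))] with x hx
    exact ne_of_gt (by linarith)
  -- log x * (w x - 1) tends to 0
  have h5 : Tendsto (fun x => Real.log x * (w x - 1)) (nhdsWithin 0 (Ioi 0)) (nhds 0) := by
    have hH : Tendsto (fun x : ℝ => (x * Real.log x) * ((Real.exp (-x) - 1) / x)
        + a * (x * Real.log x) + x * (Real.log x)^2
        + (x * Real.log x) * (Eineg x - Real.log x))
        (nhdsWithin 0 (Ioi 0)) (nhds 0) := by
      have := ((hxlog.mul hE).add (hxlog.const_mul a)).add hxlog2 |>.add (hxlog.mul tendsto_F)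
      simpa using this
    apply hH.congr'
    filter_upwards [self_mem_nhdsWithin] with x hx
    have hx0 : (0:ℝ) < x := hx
    rw [hw_def]
    field_simp
    ring
  -- the key pointwise identity
  have key : ∀ᶠ x in nhdsWithin (0:ℝ) (Ioi 0),
      (rga a x - x + x^2 * Real.log x) / x^2
        = ((1 - Real.exp (-x)) / x - a - (Eineg x - Real.log x)
            + Real.log x * (w x - 1)) / w x := by
    filter_upwards [self_mem_nhdsWithin, hwne] with x hx hwx
    have hx0 : (0:ℝ) < x := hx
    have hu : u a x = w x / x := by
      rw [u, hw_def]
      field_simp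
      ring
    rw [rga, hu, inv_div]
    field_simp
    ring
  -- the limit of the right-hand side
  have hnum : Tendsto (fun x => (1 - Real.exp (-x)) / x - a - (Eineg x - Real.log x)
      + Real.log x * (w x - 1)) (nhdsWithin 0 (Ioi 0)) (nhds (1 - a - γ' + 0)) := by
    have h1 : Tendsto (fun x : ℝ => (1 - Real.exp (-x)) / x)
        (nhdsWithin 0 (Ioi 0)) (nhds 1) := by
      have := hE.neg
      rw [neg_neg] at this
      apply this.congr
      intro x
      rw [← neg_div, neg_sub]
    exact ((h1.sub_const a).sub tendsto_F).add h5
  have hG : Tendsto (fun x => ((1 - Real.exp (-x)) / x - a - (Eineg x - Real.log x)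
      + Real.log x * (w x - 1)) / w x) (nhdsWithin 0 (Ioi 0))
      (nhds (1 - γ' - a)) := by
    have := hnum.div hw one_ne_zero
    rw [show (1 - a - γ' + 0) / 1 = 1 - γ' - a by ring] at this
    exact this
  exact hG.congr' (key.mono (fun x h => h.symm))
end
end

section
/- For every real number a there exists δ > 0 such that the function x ↦ ( (r_a(x)/2)·( x/r_a(x) − r_a(x)/x )·e^{−x} − x² log x ) / x² is bounded on (0,δ). (In the paper's notation: the transformed conformal-geodesic initial datum satisfies ẋ^r|_{scri⁻} = r̃² log r̃ + O(r̃²) as r̃ → 0⁺.) -/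
open Real Filter

open MeasureTheory Set

noncomputable section

lemma integrableOn_f {x : ℝ} (hx : 0 < x) :
    IntegrableOn (fun t => Real.exp (-t) / t) (Set.Ioi x) := by
  have hg : IntegrableOn (fun t => Real.exp (-t) * x⁻¹) (Set.Ioi x) := by
    simpa [IntegrableOn] using ((exp_neg_integrableOn_Ioi x one_pos).mul_const x⁻¹)
  refine hg.mono' ?_ ?_
  · refine (ContinuousOn.aestronglyMeasurable ?_ measurableSet_Ioi)
    exact (Real.continuous_exp.comp continuous_neg).continuousOn.div
      continuousOn_id (fun t ht => ne_of_gt (hx.trans ht))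
  · filter_upwards [MeasureTheory.ae_restrict_mem measurableSet_Ioi] with t ht
    have htpos : 0 < t := hx.trans ht
    rw [Real.norm_eq_abs, abs_of_pos (div_pos (Real.exp_pos _) htpos)]
    rw [div_eq_mul_inv]
    exact mul_le_mul_of_nonneg_left (inv_anti₀ hx ht.le) (Real.exp_pos _).le

lemma eineg_bound {x : ℝ} (hx : 0 < x) (hx1 : x ≤ 1) : |Eineg x - Real.log x| ≤ 2 := by
  set f : ℝ → ℝ := fun t => Real.exp (-t) / t with hf
  have hfi := integrableOn_f hx
  have hfi1 := integrableOn_f one_pos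
  have hsplit : (∫ t in Set.Ioi x, f t)
      = (∫ t in Set.Ioc x 1, f t) + ∫ t in Set.Ioi 1, f t := by
    rw [← MeasureTheory.setIntegral_union (Set.Ioc_disjoint_Ioi le_rfl) measurableSet_Ioi
      (hfi.mono_set Set.Ioc_subset_Ioi_self) (hfi.mono_set (Set.Ioi_subset_Ioi hx1)),
      Set.Ioc_union_Ioi_eq_Ioi hx1]
  have hIoc : (∫ t in Set.Ioc x 1, f t) = ∫ t in x..1, f t :=
    (intervalIntegral.integral_of_le hx1).symm
  -- split interval integrand
  have hone : IntervalIntegrable (fun t => 1 / t) volume x 1 := by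
    apply ContinuousOn.intervalIntegrable
    exact continuousOn_const.div continuousOn_id (fun t ht => by
      rw [Set.uIcc_of_le hx1] at ht; exact ne_of_gt (lt_of_lt_of_le hx ht.1))
  have hrest : IntervalIntegrable (fun t => (Real.exp (-t) - 1) / t) volume x 1 := by
    apply ContinuousOn.intervalIntegrable
    exact (((Real.continuous_exp.comp continuous_neg).continuousOn.sub continuousOn_const).div
      continuousOn_id (fun t ht => by
        rw [Set.uIcc_of_le hx1] at ht; exact ne_of_gt (lt_of_lt_of_le hx ht.1)))
  have hdecomp : (∫ t in x..1, f t)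
      = (∫ t in x..1, 1 / t) + ∫ t in x..1, (Real.exp (-t) - 1) / t := by
    rw [← intervalIntegral.integral_add hone hrest]
    apply intervalIntegral.integral_congr
    intro t ht
    rw [Set.uIcc_of_le hx1] at ht
    have : t ≠ 0 := ne_of_gt (lt_of_lt_of_le hx ht.1)
    simp only [hf]; ring
  have hlog : (∫ t in x..1, 1 / t) = -Real.log x := by
    rw [integral_one_div (by
      rw [Set.uIcc_of_le hx1]; intro h; exact absurd h.1 (not_le.2 hx))]
    rw [one_div, Real.log_inv]
  have hIbound : |∫ t in x..1, (Real.exp (-t) - 1) / t| ≤ 1 := by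
    have := intervalIntegral.norm_integral_le_of_norm_le_const
      (a := x) (b := 1) (C := 1) (f := fun t => (Real.exp (-t) - 1) / t) ?_
    · rw [Real.norm_eq_abs] at this
      have : |∫ t in x..1, (Real.exp (-t) - 1) / t| ≤ 1 * |1 - x| := this
      calc |∫ t in x..1, (Real.exp (-t) - 1) / t| ≤ 1 * |1 - x| := this
        _ ≤ 1 := by rw [one_mul, abs_of_nonneg (by linarith)]; linarith
    · intro t ht
      rw [Set.uIoc_of_le hx1] at ht
      have ht0 : 0 < t := hx.trans ht.1
      rw [Real.norm_eq_abs, abs_div, abs_of_pos ht0]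
      rw [div_le_one ht0]
      have h1 : Real.exp (-t) ≤ 1 := Real.exp_le_one_iff.2 (by linarith)
      have h2 : 1 - t ≤ Real.exp (-t) := by
        have := Real.add_one_le_exp (-t); linarith
      rw [abs_of_nonpos (by linarith)]
      linarith
  have hJ : |∫ t in Set.Ioi 1, f t| ≤ 1 := by
    have h0 : 0 ≤ ∫ t in Set.Ioi 1, f t := by
      apply MeasureTheory.setIntegral_nonneg measurableSet_Ioi
      intro t ht
      exact div_nonneg (Real.exp_pos _).le (le_of_lt (lt_trans one_pos ht))
    have hle : (∫ t in Set.Ioi 1, f t) ≤ ∫ t in Set.Ioi 1, Real.exp (-t) := by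
      apply MeasureTheory.setIntegral_mono_on hfi1 (by
        simpa using (exp_neg_integrableOn_Ioi 1 one_pos)) measurableSet_Ioi
      intro t ht
      rw [div_le_iff₀ (lt_trans one_pos ht)]
      nlinarith [Real.exp_pos (-t), Set.mem_Ioi.1 ht]
    rw [integral_exp_neg_Ioi] at hle
    rw [abs_of_nonneg h0]
    calc (∫ t in Set.Ioi 1, f t) ≤ Real.exp (-1) := hle
      _ ≤ 1 := Real.exp_le_one_iff.2 (by norm_num)
  have : Eineg x = Real.log x - (∫ t in x..1, (Real.exp (-t) - 1) / t)
      - ∫ t in Set.Ioi 1, f t := by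
    rw [Eineg, hsplit, hIoc, hdecomp, hlog]; ring
  rw [this]
  have := abs_sub_abs_le_abs_sub (Eineg x) (Real.log x)
  calc |Real.log x - (∫ t in x..1, (Real.exp (-t) - 1) / t) - (∫ t in Set.Ioi 1, f t) - Real.log x|
      = |-(∫ t in x..1, (Real.exp (-t) - 1) / t) + -(∫ t in Set.Ioi 1, f t)| := by congr 1; ring
    _ ≤ |(∫ t in x..1, (Real.exp (-t) - 1) / t)| + |(∫ t in Set.Ioi 1, f t)| := by
        simpa [abs_neg] using abs_add_le (-(∫ t in x..1, (Real.exp (-t) - 1) / t)) (-(∫ t in Set.Ioi 1, f t))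
    _ ≤ 2 := by linarith

lemma neg_log_le {x : ℝ} (hx : 0 < x) : -Real.log x ≤ 2 / Real.sqrt x := by
  have hs : 0 < Real.sqrt x := Real.sqrt_pos.2 hx
  have h := Real.log_le_sub_one_of_pos (inv_pos.2 hs)
  rw [Real.log_inv, Real.log_sqrt hx.le] at h
  rw [div_eq_mul_inv]
  linarith

lemma xlog1 {x : ℝ} (hx : 0 < x) : x * (-Real.log x) ≤ 2 * Real.sqrt x := by
  have hs : 0 < Real.sqrt x := Real.sqrt_pos.2 hx
  have h := neg_log_le hx
  have h2 : x * (-Real.log x) ≤ x * (2 / Real.sqrt x) :=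
    mul_le_mul_of_nonneg_left h hx.le
  have h3 : x * (2 / Real.sqrt x) = 2 * Real.sqrt x := by
    calc x * (2 / Real.sqrt x) = 2 * (x / Real.sqrt x) := by ring
      _ = 2 * Real.sqrt x := by rw [Real.div_sqrt]
  linarith

lemma xlog2 {x : ℝ} (hx : 0 < x) (hx1 : x ≤ 1) : x * (Real.log x)^2 ≤ 4 := by
  have hs : 0 < Real.sqrt x := Real.sqrt_pos.2 hx
  have hL : 0 ≤ -Real.log x := neg_nonneg.2 (Real.log_nonpos hx.le hx1)
  have h := neg_log_le hx
  have h1 : Real.sqrt x * (-Real.log x) ≤ 2 := by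
    have h0 := mul_le_mul_of_nonneg_left h hs.le
    have h2 : Real.sqrt x * (2 / Real.sqrt x) = 2 := by field_simp
    linarith
  have h3 : (Real.sqrt x * (-Real.log x))^2 ≤ 4 := by
    nlinarith [mul_nonneg hs.le hL]
  have h4 : x * (Real.log x)^2 = (Real.sqrt x * (-Real.log x))^2 := by
    rw [mul_pow, Real.sq_sqrt hx.le]; ring
  linarith

set_option maxHeartbeats 1600000 in
/-- For every real `a`, the transformed conformal-geodesic initial datum satisfies
`ẋ^r|_{scri⁻} = (r_a/2)(x/r_a − r_a/x)e^{−x} = x² log x + O(x²)` as `x → 0⁺`. -/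
theorem stmt_9 (a : ℝ) :
    ∃ δ > (0:ℝ), ∃ C : ℝ, ∀ x ∈ Set.Ioo (0:ℝ) δ,
      |((rga a x / 2) * (x / rga a x - rga a x / x) * Real.exp (-x)
          - x^2 * Real.log x) / x^2| ≤ C := by
  set K : ℝ := 3 + |a| with hKdef
  have hK3 : (3:ℝ) ≤ K := le_add_of_nonneg_right (abs_nonneg a)
  have hKpos : (0:ℝ) < K := by linarith
  clear_value K
  refine ⟨min (1/64) (1/(8*K)), lt_min (by norm_num) (one_div_pos.2 (by linarith)), 52 + 26*K, ?_⟩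
  rintro x ⟨hx0, hxδ⟩
  have hx64 : x < 1/64 := lt_of_lt_of_le hxδ (min_le_left _ _)
  have hxK0 : x < 1/(8*K) := lt_of_lt_of_le hxδ (min_le_right _ _)
  clear hxδ
  have hx1 : x < 1 := by linarith
  have hxK : x * K ≤ 1/8 := by
    have := (lt_div_iff₀ (by linarith : (0:ℝ) < 8*K)).1 hxK0
    nlinarith
  have hsx : Real.sqrt x ≤ 1/8 := by
    have h1 : Real.sqrt x ≤ Real.sqrt (1/64) := Real.sqrt_le_sqrt hx64.le
    have h2 : Real.sqrt (1/64) = 1/8 := by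
      rw [show (1/64:ℝ) = (1/8)^2 by norm_num, Real.sqrt_sq (by norm_num : (0:ℝ) ≤ 1/8)]
    linarith
  set L := Real.log x with hLdef
  clear_value L
  have hLnonpos : L ≤ 0 := hLdef ▸ Real.log_nonpos hx0.le hx1.le
  have hxL : x * (-L) ≤ 1/4 := by
    rw [hLdef]
    have := xlog1 hx0
    linarith
  have hxL0 : 0 ≤ x * (-L) := mul_nonneg hx0.le (by linarith)
  have hxL2 : x * L^2 ≤ 4 := hLdef ▸ xlog2 hx0 hx1.le
  have hgB : |Eineg x - L| ≤ 2 := hLdef ▸ eineg_bound hx0 hx1.le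
  set g := Eineg x - L with hgdef
  clear_value g
  have hg1 : -2 ≤ g := (abs_le.1 hgB).1
  have hg2 : g ≤ 2 := (abs_le.1 hgB).2
  have ha1 : -|a| ≤ a := neg_abs_le a
  have ha2 : a ≤ |a| := le_abs_self a
  have hexplow : 1 - x ≤ Real.exp (-x) := by linarith [Real.add_one_le_exp (-x)]
  have hexphi : Real.exp (-x) ≤ 1 := Real.exp_le_one_iff.2 (by linarith)
  set w := x * u a x with hwdef
  clear_value w
  have hwval : w = Real.exp (-x) + a*x + x*L + x*g := by
    rw [hwdef, u, hgdef]
    field_simp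
    ring
  have hxKa : x*(3+|a|) ≤ 1/8 := by rw [← hKdef]; exact hxK
  have hw12 : 1/2 ≤ w := by
    rw [hwval]
    nlinarith [mul_le_mul_of_nonneg_left ha1 hx0.le, mul_le_mul_of_nonneg_left hg1 hx0.le,
      hexplow, hxL, hxKa]
  have hw2 : w ≤ 2 := by
    rw [hwval]
    nlinarith [mul_le_mul_of_nonneg_left ha2 hx0.le, mul_le_mul_of_nonneg_left hg2 hx0.le,
      hexphi, hxL0, hxKa]
  have hupos : 0 < u a x := by
    by_contra h
    push_neg at h
    nlinarith [mul_nonpos_of_nonneg_of_nonpos hx0.le h]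
  have hu0 : u a x ≠ 0 := ne_of_gt hupos
  have hE : ((rga a x / 2) * (x / rga a x - rga a x / x) * Real.exp (-x) - x^2 * L) / x^2
      = (Real.exp (-x) * (w^2 - 1) - 2*w^2*x*L) / (2*x*w^2) := by
    rw [rga, hwdef]
    field_simp
  rw [hE]
  clear hE hu0 hupos hwdef hgdef hLdef
  set N := Real.exp (-x) * (w^2 - 1) - 2*w^2*x*L with hNdef
  clear_value N
  set s := w - 1 - x*L with hsdef
  clear_value s
  have hid : N = x*L*((Real.exp (-x)-1)*(w+1) - (2*w+1)*(w-1))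
      + Real.exp (-x)*(w+1)*s := by rw [hNdef, hsdef]; ring
  have hsval : s = (Real.exp (-x) - 1) + a*x + x*g := by rw [hsdef, hwval]; ring
  have hw1eq : w - 1 = x*L + s := by rw [hsdef]; ring
  clear hNdef hsdef hwval
  have habs_e : |Real.exp (-x) - 1| ≤ x := by
    rw [abs_le]; constructor <;> linarith
  have hsbound : |s| ≤ x*K := by
    rw [hsval]
    have h1 : |(Real.exp (-x) - 1) + a*x + x*g|
        ≤ |Real.exp (-x) - 1| + |a*x| + |x*g| :=
      (abs_add_le _ _).trans (add_le_add_left (abs_add_le _ _) _)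
    have h2 : |a*x| = |a| * x := by rw [abs_mul, abs_of_nonneg hx0.le, mul_comm]
    have h3 : |x*g| ≤ 2*x := by
      rw [abs_mul, abs_of_nonneg hx0.le]
      have := mul_le_mul_of_nonneg_left hgB hx0.le
      linarith
    rw [h2] at h1
    have h4 : x + |a| * x + 2*x = x*K := by rw [hKdef]; ring
    linarith
  have habs_xL : |x * L| = x * (-L) := by
    rw [abs_mul, abs_of_nonneg hx0.le, abs_of_nonpos hLnonpos]
  have hw1bound : |w - 1| ≤ x*(-L) + x*K := by
    rw [hw1eq]
    calc |x*L + s| ≤ |x*L| + |s| := abs_add_le _ _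
      _ ≤ x*(-L) + x*K := by rw [habs_xL]; linarith
  have habs_w1 : |w + 1| ≤ 3 := by rw [abs_le]; constructor <;> linarith
  have habs_2w : |2*w + 1| ≤ 5 := by rw [abs_le]; constructor <;> linarith
  have hA : |x*L*((Real.exp (-x)-1)*(w+1) - (2*w+1)*(w-1))|
      ≤ x*(-L) * (3*x + 5*(x*(-L) + x*K)) := by
    rw [abs_mul, habs_xL]
    refine mul_le_mul_of_nonneg_left ?_ hxL0
    calc |(Real.exp (-x)-1)*(w+1) - (2*w+1)*(w-1)|
        ≤ |(Real.exp (-x)-1)*(w+1)| + |(2*w+1)*(w-1)| := abs_sub _ _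
      _ = |Real.exp (-x)-1| * |w+1| + |2*w+1| * |w-1| := by rw [abs_mul, abs_mul]
      _ ≤ x*3 + 5*(x*(-L) + x*K) := by
          refine add_le_add (mul_le_mul habs_e habs_w1 (abs_nonneg _) hx0.le)
            (mul_le_mul habs_2w hw1bound (abs_nonneg _) (by norm_num))
      _ = 3*x + 5*(x*(-L) + x*K) := by ring
  have hB : |Real.exp (-x)*(w+1)*s| ≤ 3*(x*K) := by
    rw [abs_mul, abs_mul]
    have h1 : |Real.exp (-x)| * |w+1| ≤ 3 := by
      rw [abs_of_pos (Real.exp_pos _)]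
      calc Real.exp (-x) * |w+1| ≤ 1 * |w+1| :=
            mul_le_mul_of_nonneg_right hexphi (abs_nonneg _)
        _ = |w+1| := one_mul _
        _ ≤ 3 := habs_w1
    exact mul_le_mul h1 hsbound (abs_nonneg _) (by norm_num)
  have hNb : |N| ≤ x*(-L) * (3*x + 5*(x*(-L) + x*K)) + 3*(x*K) := by
    rw [hid]
    exact (abs_add_le _ _).trans (add_le_add hA hB)
  have hfin : x*(-L) * (3*x + 5*(x*(-L) + x*K)) + 3*(x*K) ≤ 26*x + 13*(K*x) := by
    have h5 : K*(x*(x*(-L))) ≤ K*(x*(1/4)) :=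
      mul_le_mul_of_nonneg_left (mul_le_mul_of_nonneg_left hxL hx0.le) hKpos.le
    have h6 : x*(x*L^2) ≤ x*4 := mul_le_mul_of_nonneg_left hxL2 hx0.le
    have h7 : x*(x*(-L)) ≤ x*(1/4) := mul_le_mul_of_nonneg_left hxL hx0.le
    nlinarith [h5, h6, h7, hxK, hK3, hx0.le, hxL0, mul_nonneg hKpos.le hx0.le]
  have hwpos : 0 < w := by linarith
  have hden : 0 < 2*x*w^2 := by
    have := mul_pos hx0 (pow_pos hwpos 2)
    linarith
  rw [abs_div, abs_of_pos hden, div_le_iff₀ hden]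
  have hw2q : (1:ℝ)/4 ≤ w^2 := by nlinarith [hw12]
  have hlast : 26*x + 13*(K*x) ≤ (52 + 26*K) * (2*x*w^2) := by
    nlinarith [mul_le_mul_of_nonneg_left hw2q
      (by nlinarith [hKpos, hx0] : (0:ℝ) ≤ (52 + 26*K) * (2*x))]
  linarith
end
end
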